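/- arXiv:1708.01327 — 4 statements merged into one kernel-verified Lean document; each statement's English description precedes it below -/
import Mathlib

section
/- Let A = [[0,1],[-1,2]] and B = [[0,-1],[1,2]] in SL_2(ℤ). For all nonzero integers r and s, every entry of the matrix sgn(rs)·A^r·B^s is greater than or equal to |rs| times the corresponding entry of the identity matrix, and in fact sgn(rs)·A^r·B^s ≫ |rs|·I, where X ≫ Y means every entry of X is greater than or equal to the absolute value of the corresponding entry of Y. -/
open Matrix

/-- `A = [[0,1],[-1,2]]` as an element of `SL₂(ℤ)`. -/
noncomputable def NewmanA : Matrix.SpecialLinearGroup (Fin 2) ℤ :=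
  ⟨!![0, 1; -1, 2], by simp [Matrix.det_fin_two_of]⟩

/-- `B = [[0,-1],[1,2]]` as an element of `SL₂(ℤ)`. -/
noncomputable def NewmanB : Matrix.SpecialLinearGroup (Fin 2) ℤ :=
  ⟨!![0, -1; 1, 2], by simp [Matrix.det_fin_two_of]⟩

/-- `X ≫ Y` : every entry of `X` is at least the absolute value of the
corresponding entry of `Y`. -/
def EntrywiseDom (X Y : Matrix (Fin 2) (Fin 2) ℤ) : Prop :=
  ∀ i j, |Y i j| ≤ X i j

lemma newmanA_zpow (r : ℤ) :
    ((NewmanA ^ r : Matrix.SpecialLinearGroup (Fin 2) ℤ) : Matrix (Fin 2) (Fin 2) ℤ)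
      = !![1 - r, r; -r, 1 + r] := by
  induction r using Int.induction_on with
  | zero => simp [Matrix.one_fin_two]
  | succ n ih =>
    rw [_root_.zpow_add_one, Matrix.SpecialLinearGroup.coe_mul, ih]
    show _ = _
    ext i j
    fin_cases i <;> fin_cases j <;>
      simp [NewmanA, Matrix.mul_apply, Fin.sum_univ_two] <;> ring
  | pred n ih =>
    rw [sub_eq_add_neg, _root_.zpow_add, _root_.zpow_neg_one, Matrix.SpecialLinearGroup.coe_mul, ih,
      Matrix.SpecialLinearGroup.coe_inv]
    have : Matrix.adjugate ((NewmanA : Matrix (Fin 2) (Fin 2) ℤ)) = !![2, -1; 1, 0] := by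
      show Matrix.adjugate !![0, 1; -1, 2] = _
      rw [Matrix.adjugate_fin_two]; norm_num
    rw [show ((NewmanA : Matrix.SpecialLinearGroup (Fin 2) ℤ) : Matrix (Fin 2) (Fin 2) ℤ).adjugate = !![2, -1; 1, 0] from this]
    ext i j
    fin_cases i <;> fin_cases j <;>
      simp [Matrix.mul_apply, Fin.sum_univ_two] <;> ring

lemma newmanB_zpow (s : ℤ) :
    ((NewmanB ^ s : Matrix.SpecialLinearGroup (Fin 2) ℤ) : Matrix (Fin 2) (Fin 2) ℤ)
      = !![1 - s, -s; s, 1 + s] := by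
  induction s using Int.induction_on with
  | zero => simp [Matrix.one_fin_two]
  | succ n ih =>
    rw [_root_.zpow_add_one, Matrix.SpecialLinearGroup.coe_mul, ih]
    ext i j
    fin_cases i <;> fin_cases j <;>
      simp [NewmanB, Matrix.mul_apply, Fin.sum_univ_two] <;> ring
  | pred n ih =>
    rw [sub_eq_add_neg, _root_.zpow_add, _root_.zpow_neg_one, Matrix.SpecialLinearGroup.coe_mul, ih,
      Matrix.SpecialLinearGroup.coe_inv]
    have h : ((NewmanB : Matrix.SpecialLinearGroup (Fin 2) ℤ) : Matrix (Fin 2) (Fin 2) ℤ).adjugate = !![2, 1; -1, 0] := by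
      show Matrix.adjugate !![0, -1; 1, 2] = _
      rw [Matrix.adjugate_fin_two]; norm_num
    rw [h]
    ext i j
    fin_cases i <;> fin_cases j <;>
      simp [Matrix.mul_apply, Fin.sum_univ_two] <;> ring

/-- For all nonzero integers `r`, `s`,
`sgn(rs) • (A ^ r * B ^ s) ≫ |rs| • 1`. -/
theorem newman_pow_dominates (r s : ℤ) (hr : r ≠ 0) (hs : s ≠ 0) :
    EntrywiseDom ((r * s).sign • ((NewmanA ^ r * NewmanB ^ s :
        Matrix.SpecialLinearGroup (Fin 2) ℤ) : Matrix (Fin 2) (Fin 2) ℤ))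
      (|r * s| • (1 : Matrix (Fin 2) (Fin 2) ℤ)) := by
  intro i j
  rw [Matrix.SpecialLinearGroup.coe_mul, newmanA_zpow, newmanB_zpow]
  have h1 : (1 ≤ r ∨ r ≤ -1) := by omega
  have h2 : (1 ≤ s ∨ s ≤ -1) := by omega
  rcases h1 with h1 | h1 <;> rcases h2 with h2 | h2 <;>
  first
  | (have hp : 0 < r * s := by
       first
       | exact mul_pos (by omega) (by omega)
       | exact mul_pos_of_neg_of_neg (by omega) (by omega)
     fin_cases i <;> fin_cases j <;>
       simp [Matrix.mul_apply, Fin.sum_univ_two, Matrix.one_apply,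
         Int.sign_eq_one_of_pos hp, abs_of_pos hp] <;> nlinarith)
  | (have hp : r * s < 0 := by
       first
       | exact mul_neg_of_pos_of_neg (by omega) (by omega)
       | exact mul_neg_of_neg_of_pos (by omega) (by omega)
     fin_cases i <;> fin_cases j <;>
       simp [Matrix.mul_apply, Fin.sum_univ_two, Matrix.one_apply,
         Int.sign_eq_neg_one_of_neg hp, abs_of_neg hp] <;> nlinarith)
end

section
/- There exists a subgroup Λ of SL_2(ℤ) such that Λ is a free group of countably infinite rank and the action of Λ on ℤ² \ {0} by matrix multiplication is free, i.e., no nontrivial element of Λ fixes a nonzero vector of ℤ². -/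
namespace FreeSL2Aux

def av (n : ℕ) : ℤ := 3 * n + 3

lemma av_ge (n : ℕ) : 3 ≤ av n := by unfold av; omega

lemma av_sep {m n : ℕ} (h : m ≠ n) : 3 ≤ |av m - av n| := by
  rcases lt_or_gt_of_ne h with h' | h'
  · rw [abs_of_neg (by unfold av; omega)]; unfold av; omega
  · rw [abs_of_pos (by unfold av; omega)]; unfold av; omega

def attP (a x y : ℤ) : Prop := |x - a * y| ≤ |y|
def attM (a x y : ℤ) : Prop := |a * x + y| ≤ |x|

lemma attP.bound {a x y : ℤ} (h : attP a x y) (ha : 3 ≤ a) : 2 * |y| ≤ |x| := by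
  unfold attP at h
  have h1 : |a * y| ≤ |x| + |x - a * y| := by
    have := abs_sub_abs_le_abs_sub (a * y) x
    have h2 : |a*y - x| = |x - a*y| := abs_sub_comm _ _
    linarith
  rw [abs_mul, abs_of_pos (by linarith : (0:ℤ) < a)] at h1
  nlinarith [abs_nonneg y]

lemma attM.bound {a x y : ℤ} (h : attM a x y) (ha : 3 ≤ a) : 2 * |x| ≤ |y| := by
  unfold attM at h
  have h1 : |a * x| ≤ |y| + |a * x + y| := by
    have := abs_sub_abs_le_abs_sub (a * x) (-y)
    have h2 : |a*x - -y| = |a*x + y| := by ring_nf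
    have h3 : |(-y)| = |y| := abs_neg y
    linarith
  rw [abs_mul, abs_of_pos (by linarith : (0:ℤ) < a)] at h1
  nlinarith [abs_nonneg x]

lemma disjPP {a b x y : ℤ} (hab : 3 ≤ |a - b|) (h1 : attP a x y) (h2 : attP b x y) :
    x = 0 ∧ y = 0 := by
  unfold attP at h1 h2
  have key : |a - b| * |y| ≤ 2 * |y| := by
    have h4 : |(x - b*y) - (x - a*y)| ≤ |x - b*y| + |x - a*y| := abs_sub _ _
    have h3 : |(x - b*y) - (x - a*y)| = |(a-b)*y| := by ring_nf
    rw [h3, abs_mul] at h4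
    linarith
  have h5 : 3 * |y| ≤ 2 * |y| := le_trans (by nlinarith [abs_nonneg y]) key
  have hy : y = 0 := by
    have : |y| ≤ 0 := by linarith
    exact abs_eq_zero.mp (le_antisymm this (abs_nonneg y))
  subst hy
  refine ⟨?_, rfl⟩
  simp only [mul_zero, sub_zero, abs_zero] at h1
  exact abs_eq_zero.mp (le_antisymm h1 (abs_nonneg x))

lemma disjMM {a b x y : ℤ} (hab : 3 ≤ |a - b|) (h1 : attM a x y) (h2 : attM b x y) :
    x = 0 ∧ y = 0 := by
  unfold attM at h1 h2
  have key : |a - b| * |x| ≤ 2 * |x| := by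
    have h4 : |(a*x + y) - (b*x + y)| ≤ |a*x + y| + |b*x + y| := abs_sub _ _
    have h3 : |(a*x + y) - (b*x + y)| = |(a-b)*x| := by ring_nf
    rw [h3, abs_mul] at h4
    linarith
  have h5 : 3 * |x| ≤ 2 * |x| := le_trans (by nlinarith [abs_nonneg x]) key
  have hx : x = 0 := by
    have : |x| ≤ 0 := by linarith
    exact abs_eq_zero.mp (le_antisymm this (abs_nonneg x))
  subst hx
  refine ⟨rfl, ?_⟩
  simp only [mul_zero, zero_add, abs_zero] at h1
  exact abs_eq_zero.mp (le_antisymm h1 (abs_nonneg y))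

lemma disjPM {a b x y : ℤ} (ha : 3 ≤ a) (hb : 3 ≤ b) (h1 : attP a x y) (h2 : attM b x y) :
    x = 0 ∧ y = 0 := by
  have b1 := h1.bound ha
  have b2 := h2.bound hb
  have hx : x = 0 := by
    have : |x| ≤ 0 := by linarith
    exact abs_eq_zero.mp (le_antisymm this (abs_nonneg x))
  have hy : y = 0 := by
    have : |y| ≤ 0 := by
      rw [hx] at b1; simp at b1; linarith [abs_nonneg y]
    exact abs_eq_zero.mp (le_antisymm this (abs_nonneg y))
  exact ⟨hx, hy⟩

lemma stepP {a x y : ℤ} (h : ¬ attM a x y) : attP a (x + a * (a*x + y)) (a*x + y) := by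
  unfold attM at h; unfold attP
  push_neg at h
  have : x + a * (a*x+y) - a * (a*x+y) = x := by ring
  rw [this]
  linarith

lemma stepM {a x y : ℤ} (h : ¬ attP a x y) : attM a (x - a*y) (y - a * (x - a*y)) := by
  unfold attP at h; unfold attM
  push_neg at h
  have : a * (x - a*y) + (y - a * (x - a*y)) = y := by ring
  rw [this]
  linarith

lemma growP {a x y : ℤ} (ha : 3 ≤ a) (h2 : 2 * |x| ≤ |a*x + y|) (hv : ¬(x = 0 ∧ y = 0)) :
    |x| + |y| < |x + a * (a*x+y)| + |a*x+y| := by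
  have hy : |y| ≤ |a*x+y| + a * |x| := by
    have h4 : |(a*x+y) - a*x| ≤ |a*x+y| + |a*x| := abs_sub _ _
    have h3 : (a*x+y) - a*x = y := by ring
    rw [h3, abs_mul, abs_of_pos (by linarith : (0:ℤ) < a)] at h4
    exact h4
  have h1 : a * |a*x+y| - |x| ≤ |x + a*(a*x+y)| := by
    have h4 := abs_sub_abs_le_abs_sub (a*(a*x+y)) (-x)
    have h3 : |a*(a*x+y) - -x| = |x + a*(a*x+y)| := by rw [show a*(a*x+y) - -x = x + a*(a*x+y) by ring]
    rw [h3, abs_mul, abs_of_pos (by linarith : (0:ℤ) < a), abs_neg] at h4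
    linarith
  rcases eq_or_ne x 0 with hx | hx
  · subst hx
    have hyne : y ≠ 0 := fun h => hv ⟨rfl, h⟩
    have h5 : 0 < |a*y| := abs_pos.mpr (mul_ne_zero (by linarith) hyne)
    rw [show (0:ℤ) + a*(a*0+y) = a*y by ring, show a*(0:ℤ)+y = y by ring, abs_zero]
    linarith
  · have hxpos : 0 < |x| := abs_pos.mpr hx
    nlinarith [mul_le_mul_of_nonneg_left h2 (show (0:ℤ) ≤ a by linarith),
      mul_pos (show (0:ℤ) < a-2 by linarith) hxpos]

lemma growM {a x y : ℤ} (ha : 3 ≤ a) (h2 : 2 * |y| ≤ |x - a*y|) (hv : ¬(x = 0 ∧ y = 0)) :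
    |x| + |y| < |x - a*y| + |y - a * (x - a*y)| := by
  have hx : |x| ≤ |x - a*y| + a * |y| := by
    have h4 : |(x - a*y) + a*y| ≤ |x - a*y| + |a*y| := abs_add_le _ _
    have h3 : (x - a*y) + a*y = x := by ring
    rw [h3, abs_mul, abs_of_pos (by linarith : (0:ℤ) < a)] at h4
    exact h4
  have h1 : a * |x - a*y| - |y| ≤ |y - a*(x - a*y)| := by
    have h4 := abs_sub_abs_le_abs_sub (a*(x - a*y)) y
    have h3 : |a*(x - a*y) - y| = |y - a*(x - a*y)| := abs_sub_comm _ _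
    rw [h3, abs_mul, abs_of_pos (by linarith : (0:ℤ) < a)] at h4
    linarith
  rcases eq_or_ne y 0 with hy | hy
  · subst hy
    have hxne : x ≠ 0 := fun h => hv ⟨h, rfl⟩
    have h5 : 0 < |a*x| := abs_pos.mpr (mul_ne_zero (by linarith) hxne)
    rw [show x - a*(0:ℤ) = x by ring, show (0:ℤ) - a*x = -(a*x) by ring, abs_neg, abs_zero]
    linarith
  · have hypos : 0 < |y| := abs_pos.mpr hy
    nlinarith [mul_le_mul_of_nonneg_left h2 (show (0:ℤ) ≤ a by linarith),
      mul_pos (show (0:ℤ) < a-2 by linarith) hypos]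

lemma supP_P {a b x y : ℤ} (ha : 3 ≤ a) (hb : 3 ≤ b) (h : attP b x y) : 2 * |x| ≤ |a*x + y| := by
  have hxy := h.bound hb
  have h1 : a * |x| - |y| ≤ |a*x + y| := by
    have h4 := abs_sub_abs_le_abs_sub (a*x) (-y)
    rw [show a*x - -y = a*x + y by ring, abs_mul, abs_of_pos (by linarith : (0:ℤ) < a), abs_neg] at h4
    linarith
  nlinarith [abs_nonneg x, abs_nonneg y]

lemma supP_M {a b x y : ℤ} (hab : 3 ≤ |a - b|) (h : attM b x y) : 2 * |x| ≤ |a*x + y| := by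
  unfold attM at h
  have h1 : |(a-b)*x| - |b*x + y| ≤ |a*x + y| := by
    have h4 := abs_sub_abs_le_abs_sub ((a-b)*x) (-(b*x+y))
    rw [show (a-b)*x - -(b*x+y) = a*x + y by ring, abs_neg] at h4
    linarith
  rw [abs_mul] at h1
  nlinarith [abs_nonneg x]

lemma supM_M {a b x y : ℤ} (ha : 3 ≤ a) (hb : 3 ≤ b) (h : attM b x y) : 2 * |y| ≤ |x - a*y| := by
  have hxy := h.bound hb
  have h1 : a * |y| - |x| ≤ |x - a*y| := by
    have h4 := abs_sub_abs_le_abs_sub (a*y) x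
    rw [abs_mul, abs_of_pos (by linarith : (0:ℤ) < a), abs_sub_comm] at h4
    linarith
  nlinarith [abs_nonneg x, abs_nonneg y]

lemma supM_P {a b x y : ℤ} (hab : 3 ≤ |a - b|) (h : attP b x y) : 2 * |y| ≤ |x - a*y| := by
  unfold attP at h
  have h1 : |(b-a)*y| - |x - b*y| ≤ |x - a*y| := by
    have h4 := abs_sub_abs_le_abs_sub ((b-a)*y) (-(x - b*y))
    rw [show (b-a)*y - -(x - b*y) = x - a*y by ring, abs_neg] at h4
    linarith
  rw [abs_mul, show |b - a| = |a - b| from abs_sub_comm b a] at h1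
  nlinarith [abs_nonneg y]


open Matrix

def G (n : ℕ) : Matrix.SpecialLinearGroup (Fin 2) ℤ :=
  ⟨!![1 + av n ^ 2, av n; av n, 1], by simp [Matrix.det_fin_two_of]; ring⟩

abbrev σ := ℕ × Bool

def mat (ℓ : σ) : Matrix.SpecialLinearGroup (Fin 2) ℤ := cond ℓ.2 (G ℓ.1) (G ℓ.1)⁻¹

def act (A : Matrix.SpecialLinearGroup (Fin 2) ℤ) (v : Fin 2 → ℤ) : Fin 2 → ℤ :=
  (A : Matrix (Fin 2) (Fin 2) ℤ).mulVec v

lemma act_mul (A B : Matrix.SpecialLinearGroup (Fin 2) ℤ) (v : Fin 2 → ℤ) :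
    act (A * B) v = act A (act B v) := by
  simp only [act, Matrix.SpecialLinearGroup.coe_mul, ← Matrix.mulVec_mulVec]

lemma act_one (v : Fin 2 → ℤ) : act 1 v = v := by
  simp [act]

lemma act_inv_cancel (A : Matrix.SpecialLinearGroup (Fin 2) ℤ) (v : Fin 2 → ℤ) :
    act A⁻¹ (act A v) = v := by
  rw [← act_mul, inv_mul_cancel, act_one]

lemma act_ne_zero (A : Matrix.SpecialLinearGroup (Fin 2) ℤ) {v : Fin 2 → ℤ} (hv : v ≠ 0) :
    act A v ≠ 0 := by
  intro h
  apply hv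
  have := congrArg (act A⁻¹) h
  rw [act_inv_cancel] at this
  rw [this]
  simp [act]

lemma act_G (n : ℕ) (v : Fin 2 → ℤ) :
    act (G n) v = ![v 0 + av n * (av n * v 0 + v 1), av n * v 0 + v 1] := by
  funext i
  fin_cases i <;>
    simp [act, G, Matrix.mulVec, dotProduct, Fin.sum_univ_two, Matrix.vecHead, Matrix.vecTail] <;> ring

lemma coe_G_inv (n : ℕ) :
    ((G n)⁻¹ : Matrix.SpecialLinearGroup (Fin 2) ℤ).1 = !![1, -av n; -av n, 1 + av n ^ 2] := by
  rw [Matrix.SpecialLinearGroup.coe_inv]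
  rw [show (G n : Matrix (Fin 2) (Fin 2) ℤ) = !![1 + av n ^ 2, av n; av n, 1] from rfl]
  rw [Matrix.adjugate_fin_two]
  simp

lemma act_G_inv (n : ℕ) (v : Fin 2 → ℤ) :
    act (G n)⁻¹ v = ![v 0 - av n * v 1, v 1 - av n * (v 0 - av n * v 1)] := by
  unfold act
  rw [coe_G_inv]
  funext i
  fin_cases i <;>
    simp [Matrix.mulVec, dotProduct, Fin.sum_univ_two, Matrix.vecHead, Matrix.vecTail] <;> ring

/-! ### Letters -/

def inv' (ℓ : σ) : σ := (ℓ.1, !ℓ.2)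

lemma inv'_inv' (ℓ : σ) : inv' (inv' ℓ) = ℓ := by cases ℓ; simp [inv']

lemma ne_inv'_self (ℓ : σ) : ℓ ≠ inv' ℓ := by
  cases ℓ with
  | mk n b => cases b <;> simp [inv']

lemma inv'_eq_iff {p q : σ} : p = inv' q ↔ q = inv' p := by
  constructor <;> (rintro rfl; rw [inv'_inv'])

lemma mat_inv' (ℓ : σ) : mat (inv' ℓ) = (mat ℓ)⁻¹ := by
  cases ℓ with
  | mk n b => cases b <;> simp [mat, inv']

def att (ℓ : σ) (v : Fin 2 → ℤ) : Prop :=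
  cond ℓ.2 (attP (av ℓ.1) (v 0) (v 1)) (attM (av ℓ.1) (v 0) (v 1))

def N (v : Fin 2 → ℤ) : ℤ := |v 0| + |v 1|

lemma N_nonneg (v : Fin 2 → ℤ) : 0 ≤ N v := by
  unfold N; positivity

lemma vec_ne_zero {v : Fin 2 → ℤ} (hv : v ≠ 0) : ¬ (v 0 = 0 ∧ v 1 = 0) := by
  rintro ⟨h0, h1⟩
  apply hv
  funext i
  fin_cases i <;> assumption

lemma att_disjoint {ℓ ℓ' : σ} (hne : ℓ' ≠ ℓ) {v : Fin 2 → ℤ} (hv : v ≠ 0) (h : att ℓ' v) :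
    ¬ att ℓ v := by
  intro h2
  apply vec_ne_zero hv
  cases ℓ with
  | mk n b =>
    cases ℓ' with
    | mk m c =>
      cases b <;> cases c <;> simp only [att, cond] at h h2
      · -- both false : attM
        have hmn : m ≠ n := fun h => hne (by simp [h])
        exact disjMM (av_sep hmn) h h2
      · exact disjPM (av_ge m) (av_ge n) h h2
      · exact (disjPM (av_ge n) (av_ge m) h2 h)
      · have hmn : m ≠ n := fun h => hne (by simp [h])
        exact disjPP (av_sep hmn) h h2

lemma att_step0 {ℓ : σ} {v : Fin 2 → ℤ} (h : ¬ att (inv' ℓ) v) :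
    att ℓ (act (mat ℓ) v) := by
  cases ℓ with
  | mk n b =>
    cases b
    · -- apply (G n)⁻¹ ; h : ¬ attP
      simp only [att, inv', cond, Bool.not_false] at h ⊢
      rw [show mat (n, false) = (G n)⁻¹ from rfl, act_G_inv]
      simpa using stepM h
    · simp only [att, inv', cond, Bool.not_true] at h ⊢
      rw [show mat (n, true) = (G n) from rfl, act_G]
      simpa using stepP h

lemma att_grow {ℓ ℓ' : σ} (hgood : ℓ' ≠ inv' ℓ) {v : Fin 2 → ℤ} (hv : v ≠ 0) (h : att ℓ' v) :
    N v < N (act (mat ℓ) v) := by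
  have hvne := vec_ne_zero hv
  cases ℓ with
  | mk n b =>
    cases ℓ' with
    | mk m c =>
      cases b
      · -- applying (G n)⁻¹, need 2|y| ≤ |x - a y|, forbidden ℓ' = (n,true)
        rw [show mat (n, false) = (G n)⁻¹ from rfl, act_G_inv]
        have hsup : 2 * |v 1| ≤ |v 0 - av n * v 1| := by
          cases c
          · -- ℓ' = (m, false) : attM (av m)
            simp only [att, cond] at h
            exact supM_M (av_ge n) (av_ge m) h
          · -- ℓ' = (m, true), m ≠ n
            have hmn : av n ≠ av m → True := fun _ => trivial
            have hm : m ≠ n := by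
              intro hEq; exact hgood (by simp [inv', hEq])
            simp only [att, cond] at h
            exact supM_P (av_sep (fun hEq => hm hEq.symm)) h
        have := growM (av_ge n) hsup hvne
        unfold N
        simpa using this
      · rw [show mat (n, true) = (G n) from rfl, act_G]
        have hsup : 2 * |v 0| ≤ |av n * v 0 + v 1| := by
          cases c
          · have hm : m ≠ n := by
              intro hEq; exact hgood (by simp [inv', hEq])
            simp only [att, cond] at h
            exact supP_M (av_sep (fun hEq => hm hEq.symm)) h
          · simp only [att, cond] at h
            exact supP_P (av_ge n) (av_ge m) h
        have := growP (av_ge n) hsup hvne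
        unfold N
        simpa using this

/-! ### Words -/

def good (p q : σ) : Prop := q ≠ inv' p

def wp (L : List σ) : Matrix.SpecialLinearGroup (Fin 2) ℤ := (L.map mat).prod

lemma wp_nil : wp ([] : List σ) = 1 := rfl

lemma wp_cons (ℓ : σ) (L : List σ) : wp (ℓ :: L) = mat ℓ * wp L := by
  simp [wp]

lemma wp_append (L₁ L₂ : List σ) : wp (L₁ ++ L₂) = wp L₁ * wp L₂ := by
  simp [wp]

lemma wp_inv_word : ∀ L : List σ, wp ((L.map inv').reverse) = (wp L)⁻¹ := by
  intro L
  induction L with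
  | nil => simp [wp]
  | cons ℓ L ih =>
    have : ((ℓ :: L).map inv').reverse = (L.map inv').reverse ++ [inv' ℓ] := by simp
    rw [this, wp_append, ih, wp_cons, wp_nil, mul_one, mat_inv', wp_cons, _root_.mul_inv_rev]

lemma chainLem1 : ∀ (L : List σ) (ℓ ℓt : σ), List.Chain' good (ℓ :: L) →
    (ℓ :: L).getLast? = some ℓt → ∀ v : Fin 2 → ℤ, v ≠ 0 → ¬ att (inv' ℓt) v →
    att ℓ (act (wp (ℓ :: L)) v) ∧ (L.length : ℤ) ≤ N (act (wp (ℓ :: L)) v) := by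
  intro L
  induction L with
  | nil =>
    intro ℓ ℓt _ hlast v hv hatt
    have hℓt : ℓ = ℓt := by simpa using hlast
    subst hℓt
    rw [show wp [ℓ] = mat ℓ by simp [wp]]
    exact ⟨att_step0 hatt, by simpa using N_nonneg _⟩
  | cons ℓ' L'' ih =>
    intro ℓ ℓt hch hlast v hv hatt
    obtain ⟨hgood, hch'⟩ := List.isChain_cons_cons.mp hch
    have hlast' : (ℓ' :: L'').getLast? = some ℓt := by
      rwa [List.getLast?_cons_cons] at hlast
    obtain ⟨hA, hN⟩ := ih ℓ' ℓt hch' hlast' v hv hatt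
    set u := act (wp (ℓ' :: L'')) v with hu
    have hune : u ≠ 0 := act_ne_zero _ hv
    have hstep : att ℓ (act (mat ℓ) u) :=
      att_step0 (att_disjoint hgood hune hA)
    have hgrow : N u < N (act (mat ℓ) u) := att_grow hgood hune hA
    have hact : act (wp (ℓ :: ℓ' :: L'')) v = act (mat ℓ) u := by
      rw [wp_cons, act_mul]
    rw [hact]
    refine ⟨hstep, ?_⟩
    have : ((ℓ' :: L'').length : ℤ) = (L''.length : ℤ) + 1 := by
      push_cast [List.length_cons]; ring
    rw [this]
    omega

lemma chainLem2 : ∀ (L : List σ) (ℓ ℓt ℓ₀ : σ), List.Chain' good (ℓ :: L) →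
    (ℓ :: L).getLast? = some ℓt → ∀ v : Fin 2 → ℤ, v ≠ 0 → att ℓ₀ v → ℓ₀ ≠ inv' ℓt →
    att ℓ (act (wp (ℓ :: L)) v) ∧ N v + ((L.length : ℤ) + 1) ≤ N (act (wp (ℓ :: L)) v) := by
  intro L
  induction L with
  | nil =>
    intro ℓ ℓt ℓ₀ _ hlast v hv hatt0 hne
    have hℓt : ℓ = ℓt := by simpa using hlast
    subst hℓt
    rw [show wp [ℓ] = mat ℓ by simp [wp]]
    have hdis : ¬ att (inv' ℓ) v := att_disjoint hne hv hatt0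
    have hgrow : N v < N (act (mat ℓ) v) := att_grow hne hv hatt0
    refine ⟨att_step0 hdis, ?_⟩
    simp only [List.length_nil, Nat.cast_zero]
    omega
  | cons ℓ' L'' ih =>
    intro ℓ ℓt ℓ₀ hch hlast v hv hatt0 hne
    obtain ⟨hgood, hch'⟩ := List.isChain_cons_cons.mp hch
    have hlast' : (ℓ' :: L'').getLast? = some ℓt := by
      rwa [List.getLast?_cons_cons] at hlast
    obtain ⟨hA, hN⟩ := ih ℓ' ℓt ℓ₀ hch' hlast' v hv hatt0 hne
    set u := act (wp (ℓ' :: L'')) v with hu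
    have hune : u ≠ 0 := act_ne_zero _ hv
    have hstep : att ℓ (act (mat ℓ) u) :=
      att_step0 (att_disjoint hgood hune hA)
    have hgrow : N u < N (act (mat ℓ) u) := att_grow hgood hune hA
    have hact : act (wp (ℓ :: ℓ' :: L'')) v = act (mat ℓ) u := by
      rw [wp_cons, act_mul]
    rw [hact]
    refine ⟨hstep, ?_⟩
    have : ((ℓ' :: L'').length : ℤ) = (L''.length : ℤ) + 1 := by
      push_cast [List.length_cons]; ring
    rw [this]
    omega

lemma caseA (L : List σ) (ℓh ℓt : σ) (hh : L.head? = some ℓh) (hl : L.getLast? = some ℓt)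
    (hch : List.Chain' good L) (hg : ℓh ≠ inv' ℓt) (v : Fin 2 → ℤ) (hv : v ≠ 0)
    (hatt : ¬ att (inv' ℓt) v) : act (wp L) v ≠ v := by
  obtain ⟨a, T, rfl⟩ : ∃ a T, L = a :: T := by
    cases L with
    | nil => simp at hh
    | cons a T => exact ⟨a, T, rfl⟩
  have ha : ℓh = a := by simpa using hh.symm
  subst ha
  intro hfix
  have hfixpow : ∀ j : ℕ, act ((wp (ℓh :: T)) ^ (j + 1)) v = v := by
    intro j
    induction j with
    | zero => simpa using hfix
    | succ j ihj =>
      rw [pow_succ, act_mul, hfix, ihj]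
  have hbound : ∀ j : ℕ, att ℓh (act ((wp (ℓh :: T)) ^ (j + 1)) v) ∧
      (j : ℤ) ≤ N (act ((wp (ℓh :: T)) ^ (j + 1)) v) := by
    intro j
    induction j with
    | zero =>
      rw [pow_one]
      obtain ⟨h1, h2⟩ := chainLem1 T ℓh ℓt hch hl v hv hatt
      exact ⟨h1, by have := N_nonneg (act (wp (ℓh :: T)) v); omega⟩
    | succ j ihj =>
      obtain ⟨hA, hB⟩ := ihj
      set u := act ((wp (ℓh :: T)) ^ (j + 1)) v with hu
      have hune : u ≠ 0 := act_ne_zero _ hv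
      obtain ⟨h1, h2⟩ := chainLem2 T ℓh ℓt ℓh hch hl u hune hA hg
      rw [pow_succ', act_mul, ← hu]
      exact ⟨h1, by omega⟩
  have hcontra := (hbound ((N v).toNat + 1)).2
  rw [hfixpow ((N v).toNat + 1)] at hcontra
  have : ((N v).toNat : ℤ) = N v := Int.toNat_of_nonneg (N_nonneg v)
  push_cast at hcontra
  omega

lemma mainLemAux : ∀ k : ℕ, ∀ L : List σ, L.length ≤ k → L ≠ [] → List.Chain' good L →
    ∀ v : Fin 2 → ℤ, v ≠ 0 → act (wp L) v ≠ v := by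
  intro k
  induction k with
  | zero =>
    intro L hlen hne
    cases L with
    | nil => exact absurd rfl hne
    | cons a T => simp at hlen
  | succ k ih =>
  intro L hlen hne hch v hv
  obtain ⟨ℓh, T, rfl⟩ := List.exists_cons_of_ne_nil hne
  obtain ⟨ℓt, hlast⟩ : ∃ ℓt, (ℓh :: T).getLast? = some ℓt :=
    ⟨_, List.getLast?_eq_getLast (by simp)⟩
  by_cases hg : ℓh = inv' ℓt
  · -- cyclically reducible case
    rcases List.eq_nil_or_concat' T with rfl | ⟨M, ℓ2, rfl⟩
    · have hℓt : ℓh = ℓt := by simpa using hlast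
      rw [← hℓt] at hg
      exact absurd hg (ne_inv'_self ℓh)
    · have hℓt : ℓ2 = ℓt := by
        have h9 : (ℓh :: (M ++ [ℓ2])) = (ℓh :: M) ++ [ℓ2] := by simp
        rw [h9, List.getLast?_concat] at hlast
        simpa using hlast
      subst hℓt
      have hM : M ≠ [] := by
        rintro rfl
        have hgood : good ℓh ℓ2 := by simpa [List.Chain', List.isChain_pair] using hch
        exact hgood (inv'_eq_iff.mp hg)
      intro hfix
      have hu : act (mat ℓ2) v ≠ 0 := act_ne_zero _ hv
      have hwp : wp (ℓh :: (M ++ [ℓ2])) = mat ℓh * wp M * mat ℓ2 := by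
        rw [wp_cons, wp_append, show wp [ℓ2] = mat ℓ2 by simp [wp], ← mul_assoc]
      have heq : act (wp M) (act (mat ℓ2) v) = act (mat ℓ2) v := by
        have h1 : act (mat ℓh) (act (wp M) (act (mat ℓ2) v)) = v := by
          rw [← act_mul, ← act_mul, ← hwp]; exact hfix
        have h2 := congrArg (act (mat ℓh)⁻¹) h1
        rw [act_inv_cancel] at h2
        rw [h2, hg, mat_inv', inv_inv]
      have hchM : List.Chain' good M :=
        hch.infix ⟨[ℓh], [ℓ2], by simp⟩
      refine ih M ?_ hM hchM _ hu heq
      have : (ℓh :: (M ++ [ℓ2])).length = M.length + 2 := by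
        simp [List.length_append]
      omega
  · by_cases hα : att (inv' ℓt) v
    · -- pass to the inverse word
      have hh' : (((ℓh :: T).map inv').reverse).head? = some (inv' ℓt) := by
        rw [List.head?_reverse, List.getLast?_map, hlast]; rfl
      have hl' : (((ℓh :: T).map inv').reverse).getLast? = some (inv' ℓh) := by
        rw [List.getLast?_reverse]; simp
      have hch' : List.Chain' good (((ℓh :: T).map inv').reverse) := by
        unfold List.Chain'
        rw [List.isChain_reverse, List.isChain_map]
        refine List.IsChain.imp ?_ hch
        intro a b hab
        intro hEq
        exact hab (by rw [← inv'_inv' b, ← hEq])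
      have hg' : inv' ℓt ≠ inv' (inv' ℓh) := by
        rw [inv'_inv']
        exact fun hEq => hg hEq.symm
      have hatt' : ¬ att (inv' (inv' ℓh)) v := by
        rw [inv'_inv']
        exact att_disjoint (fun hEq => hg hEq.symm) hv hα
      intro hfix
      have hfix' : act (wp (((ℓh :: T).map inv').reverse)) v = v := by
        rw [wp_inv_word]
        have := congrArg (act (wp (ℓh :: T))⁻¹) hfix
        rw [act_inv_cancel] at this
        exact this.symm
      exact caseA _ (inv' ℓt) (inv' ℓh) hh' hl' hch' hg' v hv hatt' hfix'
    · exact caseA (ℓh :: T) ℓh ℓt (by simp) hlast hch hg v hv hα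

theorem mainLem (L : List σ) (hne : L ≠ []) (hch : List.Chain' good L) (v : Fin 2 → ℤ)
    (hv : v ≠ 0) : act (wp L) v ≠ v :=
  mainLemAux L.length L le_rfl hne hch v hv


/-! ### Free group glue -/

lemma not_chain'_decomp : ∀ L : List σ, ¬ List.Chain' good L →
    ∃ (L₁ L₂ : List σ) (x : ℕ) (b : Bool), L = L₁ ++ (x, b) :: (x, !b) :: L₂ := by
  intro L
  induction L with
  | nil => intro h; exact absurd List.isChain_nil h
  | cons p L ih =>
    cases L with
    | nil => intro h; exact absurd (List.isChain_singleton p) h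
    | cons q L' =>
      intro h
      unfold List.Chain' at h
      rw [List.isChain_cons_cons] at h
      by_cases hpq : good p q
      · have h2 : ¬ List.Chain' good (q :: L') := fun hc => h ⟨hpq, hc⟩
        obtain ⟨L₁, L₂, x, b, hEq⟩ := ih h2
        exact ⟨p :: L₁, L₂, x, b, by rw [List.cons_append, ← hEq]⟩
      · have hq : q = inv' p := not_not.mp hpq
        cases p with
        | mk x b =>
          refine ⟨[], L', x, b, ?_⟩
          rw [hq]
          rfl

lemma toWord_chain' (w : FreeGroup ℕ) : List.Chain' good w.toWord := by
  by_contra h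
  obtain ⟨L₁, L₂, x, b, hEq⟩ := not_chain'_decomp _ h
  rw [← FreeGroup.reduce_toWord w] at hEq
  exact FreeGroup.reduce.not hEq

def φ : FreeGroup ℕ →* Matrix.SpecialLinearGroup (Fin 2) ℤ := FreeGroup.lift G

lemma φ_eq_wp (w : FreeGroup ℕ) : φ w = wp w.toWord := by
  conv_lhs => rw [← FreeGroup.mk_toWord (x := w)]
  rw [show φ (FreeGroup.mk w.toWord) = FreeGroup.lift G (FreeGroup.mk w.toWord) from rfl,
    FreeGroup.lift_mk]
  rfl

lemma key (w : FreeGroup ℕ) (hw : w ≠ 1) (v : Fin 2 → ℤ) (hv : v ≠ 0) :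
    act (φ w) v ≠ v := by
  rw [φ_eq_wp]
  exact mainLem _ (fun h => hw (FreeGroup.toWord_eq_nil_iff.mp h)) (toWord_chain' w) v hv

lemma φ_inj : Function.Injective φ := by
  refine (injective_iff_map_eq_one φ).mpr ?_
  intro a ha
  by_contra h
  have hv : (![1, 0] : Fin 2 → ℤ) ≠ 0 := by
    intro h0
    have := congrFun h0 0
    simp at this
  have hkey := key a h ![1, 0] hv
  rw [ha, act_one] at hkey
  exact hkey rfl

end FreeSL2Aux

open Matrix

/-- There is a subgroup `Λ` of `SL₂(ℤ)` which is a free group of countably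
infinite rank and which acts freely on `ℤ² \ {0}` by matrix multiplication:
no nontrivial element of `Λ` fixes a nonzero vector of `ℤ²`. -/
theorem exists_free_subgroup_acting_freely :
    ∃ Λ : Subgroup (Matrix.SpecialLinearGroup (Fin 2) ℤ),
      Nonempty (Λ ≃* FreeGroup ℕ) ∧
      ∀ g ∈ Λ, g ≠ 1 → ∀ v : Fin 2 → ℤ, v ≠ 0 →
        Matrix.mulVec ((g : Matrix.SpecialLinearGroup (Fin 2) ℤ) :
          Matrix (Fin 2) (Fin 2) ℤ) v ≠ v := by
  refine ⟨FreeSL2Aux.φ.range, ⟨(MonoidHom.ofInjective FreeSL2Aux.φ_inj).symm⟩, ?_⟩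
  rintro g hg hgne v hv
  obtain ⟨w, hw⟩ := hg
  have hw1 : w ≠ 1 := by
    rintro rfl
    rw [_root_.map_one] at hw
    exact hgne hw.symm
  have hkey := FreeSL2Aux.key w hw1 v hv
  rw [hw] at hkey
  exact hkey
end

section
/- Let π : Γ → U(H) be a unitary representation of a countable discrete group Γ. Then the following are equivalent: (a) the tensor product representation π ⊗ conj(π) on H ⊗ conj(H) has a nonzero invariant vector; (b) there exists a unitary representation σ of Γ such that π ⊗ σ has a nonzero invariant vector; (c) π contains a nonzero finite-dimensional subrepresentation. -/
open scoped InnerProductSpace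

/-- A continuous linear map between inner product spaces is Hilbert–Schmidt
if the sums `∑ ‖T v‖²` over finite orthonormal families are uniformly
bounded. -/
def IsHilbertSchmidt {K H : Type} [NormedAddCommGroup K]
    [InnerProductSpace ℂ K] [NormedAddCommGroup H] [InnerProductSpace ℂ H]
    (T : K →L[ℂ] H) : Prop :=
  ∃ C : ℝ, ∀ s : Finset K, (∀ v ∈ s, ‖v‖ = 1) →
    (∀ v ∈ s, ∀ w ∈ s, v ≠ w → ⟪v, w⟫_ℂ = 0) →
    ∑ v ∈ s, ‖T v‖ ^ 2 ≤ C

variable {K H : Type} [NormedAddCommGroup K]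
    [InnerProductSpace ℂ K] [NormedAddCommGroup H] [InnerProductSpace ℂ H]

noncomputable def badSeq (T : K →L[ℂ] H) (ε : ℝ)
    (h : ∀ U : Submodule ℂ K, FiniteDimensional ℂ U →
      ∃ w, w ∈ Uᗮ ∧ ‖w‖ = 1 ∧ ε < ‖T w‖) : ℕ → K
  | n =>
    (h (Submodule.span ℂ (Set.range fun m : Fin n => badSeq T ε h m))
      (FiniteDimensional.span_of_finite ℂ (Set.finite_range _))).choose
  termination_by n => n
  decreasing_by all_goals exact m.isLt

theorem badSeq_spec (T : K →L[ℂ] H) (ε : ℝ)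
    (h : ∀ U : Submodule ℂ K, FiniteDimensional ℂ U →
      ∃ w, w ∈ Uᗮ ∧ ‖w‖ = 1 ∧ ε < ‖T w‖) (n : ℕ) :
    badSeq T ε h n ∈ (Submodule.span ℂ (Set.range fun m : Fin n => badSeq T ε h m))ᗮ ∧
      ‖badSeq T ε h n‖ = 1 ∧ ε < ‖T (badSeq T ε h n)‖ := by
  rw [badSeq]
  exact (h _ (FiniteDimensional.span_of_finite ℂ (Set.finite_range _))).choose_spec

theorem badSeq_inner (T : K →L[ℂ] H) (ε : ℝ) (h) {m n : ℕ} (hmn : m < n) :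
    ⟪badSeq T ε h m, badSeq T ε h n⟫_ℂ = 0 := by
  have h1 := (badSeq_spec T ε h n).1
  exact (Submodule.mem_orthogonal _ _).1 h1 _
    (Submodule.subset_span ⟨⟨m, hmn⟩, rfl⟩)

theorem badSeq_injective (T : K →L[ℂ] H) (ε : ℝ) (h) :
    Function.Injective (badSeq T ε h) := by
  intro i j hij
  by_contra hne
  rcases Nat.lt_or_ge i j with hlt | hge
  · have := badSeq_inner T ε h hlt
    rw [hij, inner_self_eq_zero] at this
    have h1 := (badSeq_spec T ε h j).2.1
    rw [this, norm_zero] at h1; norm_num at h1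
  · have hlt : j < i := lt_of_le_of_ne hge (Ne.symm fun hji => hne hji)
    have := badSeq_inner T ε h hlt
    rw [← hij, inner_self_eq_zero] at this
    have h1 := (badSeq_spec T ε h i).2.1
    rw [this, norm_zero] at h1; norm_num at h1

/-- key finitary lemma: a Hilbert–Schmidt operator is small off a
finite-dimensional subspace. -/
theorem IsHilbertSchmidt.exists_fd (T : K →L[ℂ] H) (hs : IsHilbertSchmidt T)
    {ε : ℝ} (hε : 0 < ε) :
    ∃ U : Submodule ℂ K, FiniteDimensional ℂ U ∧ ∀ w ∈ Uᗮ, ‖T w‖ ≤ ε * ‖w‖ := by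
  by_contra hcon
  push_neg at hcon
  have h : ∀ U : Submodule ℂ K, FiniteDimensional ℂ U →
      ∃ w, w ∈ Uᗮ ∧ ‖w‖ = 1 ∧ ε < ‖T w‖ := by
    intro U hU
    obtain ⟨w, hw, hTw⟩ := hcon U hU
    have hw0 : w ≠ 0 := by
      rintro rfl; simp at hTw
    have hnw : (0:ℝ) < ‖w‖ := norm_pos_iff.2 hw0
    refine ⟨(‖w‖ : ℂ)⁻¹ • w, Submodule.smul_mem _ _ hw, ?_, ?_⟩
    · rw [norm_smul, norm_inv, Complex.norm_real, norm_norm, inv_mul_cancel₀ hnw.ne']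
    · rw [map_smul, norm_smul, norm_inv, Complex.norm_real, norm_norm]
      calc ε = (ε * ‖w‖) * ‖w‖⁻¹ := by field_simp
        _ < ‖T w‖ * ‖w‖⁻¹ := mul_lt_mul_of_pos_right hTw (by positivity)
        _ = ‖w‖⁻¹ * ‖T w‖ := mul_comm _ _
  classical
  obtain ⟨C, hC⟩ := hs
  obtain ⟨n, hn⟩ := exists_nat_gt (C / ε ^ 2)
  have hCn : C < n * ε ^ 2 := by
    rw [div_lt_iff₀ (by positivity)] at hn; linarith
  set u := badSeq T ε h with hu
  set s : Finset K := (Finset.range n).image u with hsdef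
  have hcard : s.card = n := by
    rw [hsdef, Finset.card_image_of_injective _ (badSeq_injective T ε h),
      Finset.card_range]
  have horth : ∀ v ∈ s, ∀ w ∈ s, v ≠ w → ⟪v, w⟫_ℂ = 0 := by
    rintro v hv w hw hvw
    simp only [hsdef, Finset.mem_image, Finset.mem_range] at hv hw
    obtain ⟨i, _, rfl⟩ := hv
    obtain ⟨j, _, rfl⟩ := hw
    have hij : i ≠ j := fun hh => hvw (by rw [hh])
    rcases hij.lt_or_gt with hlt | hlt
    · exact badSeq_inner T ε h hlt
    · rw [← inner_conj_symm, badSeq_inner T ε h hlt, map_zero]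
  have hnorm : ∀ v ∈ s, ‖v‖ = 1 := by
    rintro v hv
    simp only [hsdef, Finset.mem_image, Finset.mem_range] at hv
    obtain ⟨i, _, rfl⟩ := hv
    exact (badSeq_spec T ε h i).2.1
  have hsum := hC s hnorm horth
  have hge : (n : ℝ) * ε ^ 2 ≤ ∑ v ∈ s, ‖T v‖ ^ 2 := by
    have : ∀ v ∈ s, ε ^ 2 ≤ ‖T v‖ ^ 2 := by
      rintro v hv
      simp only [hsdef, Finset.mem_image, Finset.mem_range] at hv
      obtain ⟨i, _, rfl⟩ := hv
      exact pow_le_pow_left₀ hε.le ((badSeq_spec T ε h i).2.2).le 2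
    calc (n:ℝ) * ε ^ 2 = ∑ _v ∈ s, ε ^ 2 := by
          rw [Finset.sum_const, hcard, nsmul_eq_mul]
      _ ≤ ∑ v ∈ s, ‖T v‖ ^ 2 := Finset.sum_le_sum this
  linarith

variable {K H : Type} [NormedAddCommGroup K]
    [InnerProductSpace ℂ K] [NormedAddCommGroup H] [InnerProductSpace ℂ H]

-- finite rank operator is compact
theorem isCompactOperator_of_fd [CompleteSpace K] (T : K →L[ℂ] H)
    (U : Submodule ℂ K) [FiniteDimensional ℂ U] :
    IsCompactOperator ⇑(T ∘L (U.subtypeL ∘L U.orthogonalProjectionOnto)) := by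
  set f := T ∘L (U.subtypeL ∘L U.orthogonalProjectionOnto) with hf
  set W : Submodule ℂ H := U.map (T : K →ₗ[ℂ] H) with hW
  haveI : FiniteDimensional ℂ W := Module.Finite.map _ _
  refine ⟨(Subtype.val '' (Metric.closedBall (0 : W) (‖f‖ + 1))), ?_, ?_⟩
  · exact (isCompact_closedBall _ _).image continuous_subtype_val
  · have hsub : Metric.closedBall (0 : K) 1 ⊆ f ⁻¹' (Subtype.val '' (Metric.closedBall (0 : W) (‖f‖ + 1))) := by
      intro x hx
      have hmem : f x ∈ W := by
        refine ⟨(U.subtypeL ∘L U.orthogonalProjectionOnto) x, Submodule.coe_mem _, rfl⟩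
      have hnorm : ‖f x‖ ≤ ‖f‖ + 1 := by
        calc ‖f x‖ ≤ ‖f‖ * ‖x‖ := f.le_opNorm x
          _ ≤ ‖f‖ * 1 := by
              have := Metric.mem_closedBall.1 hx
              simp only [dist_zero_right] at this
              exact mul_le_mul_of_nonneg_left this (norm_nonneg f)
          _ ≤ ‖f‖ + 1 := by linarith [norm_nonneg f]
      exact ⟨⟨f x, hmem⟩, by simpa [Metric.mem_closedBall, dist_zero_right] using hnorm, rfl⟩
    exact Filter.mem_of_superset (Metric.closedBall_mem_nhds 0 one_pos) hsub

theorem IsHilbertSchmidt.isCompactOperator [CompleteSpace K] [CompleteSpace H]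
    (T : K →L[ℂ] H) (hs : IsHilbertSchmidt T) : IsCompactOperator ⇑T := by
  have h : ∀ n : ℕ, ∃ F : K →L[ℂ] H, IsCompactOperator ⇑F ∧ ‖T - F‖ ≤ 1 / (n + 1) := by
    intro n
    obtain ⟨U, hU, hle⟩ := hs.exists_fd T (ε := 1 / (n + 1)) (by positivity)
    haveI := hU
    refine ⟨T ∘L (U.subtypeL ∘L U.orthogonalProjectionOnto), isCompactOperator_of_fd T U, ?_⟩
    refine ContinuousLinearMap.opNorm_le_bound _ (by positivity) fun x => ?_
    have hxP : x - (U.subtypeL ∘L U.orthogonalProjectionOnto) x ∈ Uᗮ :=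
      Submodule.sub_starProjection_mem_orthogonal x
    have h1 : ‖T (x - (U.subtypeL ∘L U.orthogonalProjectionOnto) x)‖ ≤
        (1 / (n + 1)) * ‖x - (U.subtypeL ∘L U.orthogonalProjectionOnto) x‖ := hle _ hxP
    have h2 : ‖x - (U.subtypeL ∘L U.orthogonalProjectionOnto) x‖ ≤ ‖x‖ := by
      have hPmem : ((U.subtypeL ∘L U.orthogonalProjectionOnto) x) ∈ U := Submodule.coe_mem _
      have horth : ⟪(U.subtypeL ∘L U.orthogonalProjectionOnto) x,
          x - (U.subtypeL ∘L U.orthogonalProjectionOnto) x⟫_ℂ = 0 :=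
        (Submodule.mem_orthogonal _ _).1 hxP _ hPmem
      have hpyth := norm_add_sq_eq_norm_sq_add_norm_sq_of_inner_eq_zero _ _ horth
      rw [add_sub_cancel] at hpyth
      nlinarith [norm_nonneg ((U.subtypeL ∘L U.orthogonalProjectionOnto) x), norm_nonneg x,
        norm_nonneg (x - (U.subtypeL ∘L U.orthogonalProjectionOnto) x)]
    calc ‖(T - T ∘L (U.subtypeL ∘L U.orthogonalProjectionOnto)) x‖
        = ‖T (x - (U.subtypeL ∘L U.orthogonalProjectionOnto) x)‖ := by
          simp [ContinuousLinearMap.sub_apply, map_sub]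
      _ ≤ (1 / (n + 1)) * ‖x - (U.subtypeL ∘L U.orthogonalProjectionOnto) x‖ := h1
      _ ≤ (1 / (n + 1)) * ‖x‖ := by
          apply mul_le_mul_of_nonneg_left h2 (by positivity)
  choose F hFc hFle using h
  refine isCompactOperator_of_tendsto (F := F) (l := Filter.atTop) ?_ (Filter.Eventually.of_forall hFc)
  rw [tendsto_iff_norm_sub_tendsto_zero]
  refine squeeze_zero (fun n => norm_nonneg _) (fun n => by simpa [norm_sub_rev] using hFle n) ?_
  simpa [one_div] using tendsto_one_div_add_atTop_nhds_zero_nat (𝕜 := ℝ)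

open ContinuousLinearMap in
theorem exists_eigenvector [CompleteSpace K] [CompleteSpace H]
    (T : K →L[ℂ] H) (hs : IsHilbertSchmidt T) (hne : T ≠ 0) :
    ∃ (μ : ℝ) (v : H), 0 < μ ∧ v ≠ 0 ∧
      (T ∘L ContinuousLinearMap.adjoint T) v = (μ : ℂ) • v := by
  set A := ContinuousLinearMap.adjoint T with hA
  set S := T ∘L A with hSdef
  have hTA : ContinuousLinearMap.adjoint A = T := by
    rw [hA, ContinuousLinearMap.adjoint_adjoint]
  have hAne : A ≠ 0 := by
    intro h0
    apply hne
    rw [← hTA, h0, map_zero]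
  have hAnorm : (0:ℝ) < ‖A‖ := norm_pos_iff.2 hAne
  set μ := ‖A‖ ^ 2 with hμdef
  have hμ : 0 < μ := by positivity
  -- choose near-maximizing unit vectors
  have hxn : ∀ n : ℕ, ∃ x : H, ‖x‖ = 1 ∧ ‖A‖ - 1 / (n + 1) < ‖A x‖ := by
    intro n
    set r := max (‖A‖ - 1 / (n + 1)) (‖A‖ / 2) with hr
    have hrlt : r < ‖A‖ := by
      have h01 : (0:ℝ) < 1 / (n + 1) := by positivity
      exact max_lt (by linarith) (by linarith)
    have hrpos : 0 < r := lt_of_lt_of_le (by linarith) (le_max_right _ _)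
    obtain ⟨x, hx1, hx2⟩ := A.exists_lt_apply_of_lt_opNorm hrlt
    have hx0 : x ≠ 0 := by
      rintro rfl; rw [map_zero, norm_zero] at hx2; linarith
    have hnx : (0:ℝ) < ‖x‖ := norm_pos_iff.2 hx0
    refine ⟨(‖x‖ : ℂ)⁻¹ • x, ?_, ?_⟩
    · rw [norm_smul, norm_inv, Complex.norm_real, norm_norm, inv_mul_cancel₀ hnx.ne']
    · rw [map_smul, norm_smul, norm_inv, Complex.norm_real, norm_norm]
      have h1x : 1 ≤ ‖x‖⁻¹ := by
        rw [le_inv_comm₀ one_pos hnx]; simpa using hx1.le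
      calc ‖A‖ - 1 / (n + 1) ≤ r := le_max_left _ _
        _ < ‖A x‖ := hx2
        _ = 1 * ‖A x‖ := (one_mul _).symm
        _ ≤ ‖x‖⁻¹ * ‖A x‖ := mul_le_mul_of_nonneg_right h1x (norm_nonneg _)
  choose x hx1 hx2 using hxn
  have hlim : Filter.Tendsto (fun n => ‖A (x n)‖) Filter.atTop (nhds ‖A‖) := by
    have hlow : Filter.Tendsto (fun n : ℕ => ‖A‖ - 1 / (n + 1)) Filter.atTop (nhds ‖A‖) := by
      have := tendsto_one_div_add_atTop_nhds_zero_nat (𝕜 := ℝ)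
      simpa using Filter.Tendsto.const_sub ‖A‖ this
    refine tendsto_of_tendsto_of_tendsto_of_le_of_le hlow tendsto_const_nhds
      (fun n => (hx2 n).le) (fun n => ?_)
    calc ‖A (x n)‖ ≤ ‖A‖ * ‖x n‖ := A.le_opNorm _
      _ = ‖A‖ := by rw [hx1 n, mul_one]
  have hlim2 : Filter.Tendsto (fun n => ‖A (x n)‖ ^ 2) Filter.atTop (nhds μ) := by
    simpa [hμdef] using hlim.pow 2
  -- the defect tends to zero
  have hAx_le : ∀ n, ‖A (x n)‖ ≤ ‖A‖ := fun n => by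
    calc ‖A (x n)‖ ≤ ‖A‖ * ‖x n‖ := A.le_opNorm _
      _ = ‖A‖ := by rw [hx1 n, mul_one]
  have hdefect : ∀ n : ℕ, ‖S (x n) - (μ : ℂ) • x n‖ ^ 2 ≤ 2 * μ * (μ - ‖A (x n)‖ ^ 2) := by
    intro n
    have h2 : ⟪x n, (ContinuousLinearMap.adjoint A) (A (x n))⟫_ℂ
        = ⟪A (x n), A (x n)⟫_ℂ :=
      ContinuousLinearMap.adjoint_inner_right A (x n) (A (x n))
    rw [hTA] at h2
    have hc : ⟪x n, S (x n)⟫_ℂ = ((‖A (x n)‖ ^ 2 : ℝ) : ℂ) := by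
      have hS : S (x n) = T (A (x n)) := rfl
      rw [hS, h2, inner_self_eq_norm_sq_to_K]
      norm_cast
    have hre' : ⟪S (x n), (μ : ℂ) • x n⟫_ℂ = ((μ * ‖A (x n)‖ ^ 2 : ℝ) : ℂ) := by
      rw [inner_smul_right, ← inner_conj_symm, hc, Complex.conj_ofReal]
      push_cast; ring
    have hre : RCLike.re (⟪S (x n), (μ : ℂ) • x n⟫_ℂ) = μ * ‖A (x n)‖ ^ 2 := by
      rw [hre']; exact Complex.ofReal_re _
    have hSx : ‖S (x n)‖ ≤ μ := by
      have : ‖S (x n)‖ = ‖T (A (x n))‖ := rfl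
      rw [this]
      have hTnorm : ‖T‖ = ‖A‖ := by
        rw [← hTA]
        exact (LinearIsometryEquiv.norm_map ContinuousLinearMap.adjoint A).symm ▸ rfl
      calc ‖T (A (x n))‖ ≤ ‖T‖ * ‖A (x n)‖ := T.le_opNorm _
        _ ≤ ‖A‖ * ‖A‖ := by
            rw [hTnorm]
            exact mul_le_mul_of_nonneg_left (hAx_le n) (norm_nonneg A)
        _ = μ := by rw [hμdef]; ring
    have hexp := @norm_sub_sq ℂ _ _ _ _ (S (x n)) ((μ : ℂ) • x n)
    rw [hre] at hexp
    have hnμx : ‖(μ : ℂ) • x n‖ = μ := by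
      rw [norm_smul, hx1 n, mul_one, Complex.norm_real, Real.norm_eq_abs, abs_of_pos hμ]
    rw [hnμx] at hexp
    nlinarith [norm_nonneg (S (x n)), sq_nonneg (‖S (x n)‖ - μ)]
  have hd0 : Filter.Tendsto (fun n => S (x n) - (μ : ℂ) • x n) Filter.atTop (nhds 0) := by
    rw [tendsto_zero_iff_norm_tendsto_zero]
    have hb : Filter.Tendsto (fun n => 2 * μ * (μ - ‖A (x n)‖ ^ 2)) Filter.atTop (nhds 0) := by
      have := hlim2.const_sub μ
      have h2 := this.const_mul (2 * μ)
      simpa using h2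
    have hsq : Filter.Tendsto (fun n => ‖S (x n) - (μ : ℂ) • x n‖ ^ 2) Filter.atTop (nhds 0) :=
      squeeze_zero (fun n => by positivity) hdefect hb
    have := hsq.sqrt
    simpa [Real.sqrt_sq (norm_nonneg _)] using this
  -- compactness: extract convergent subsequence of S (x n)
  have hcomp : IsCompactOperator ⇑T := hs.isCompactOperator T
  have hK : IsCompact (closure (⇑T '' Metric.closedBall 0 ‖A‖)) :=
    hcomp.isCompact_closure_image_closedBall ‖A‖
  have hmem : ∀ n, S (x n) ∈ closure (⇑T '' Metric.closedBall 0 ‖A‖) := by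
    intro n
    apply subset_closure
    exact ⟨A (x n), by simpa [Metric.mem_closedBall, dist_zero_right] using hAx_le n, rfl⟩
  obtain ⟨z, -, φ, hφ, hz⟩ := hK.tendsto_subseq hmem
  have hμx : Filter.Tendsto (fun k => (μ : ℂ) • x (φ k)) Filter.atTop (nhds z) := by
    have hdφ : Filter.Tendsto (fun k => S (x (φ k)) - (μ : ℂ) • x (φ k)) Filter.atTop (nhds 0) :=
      hd0.comp hφ.tendsto_atTop
    have := hz.sub hdφ
    simpa using this
  set v : H := ((μ : ℂ))⁻¹ • z with hv
  have hμne : ((μ : ℂ)) ≠ 0 := by exact_mod_cast hμ.ne'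
  have hxv : Filter.Tendsto (fun k => x (φ k)) Filter.atTop (nhds v) := by
    have h2 := hμx.const_smul ((μ : ℂ))⁻¹
    have h3 : (fun k => ((μ : ℂ))⁻¹ • ((μ : ℂ) • x (φ k))) = fun k => x (φ k) :=
      funext fun k => inv_smul_smul₀ hμne _
    rw [h3] at h2
    exact h2
  have hvnorm : ‖v‖ = 1 := by
    have h1 : Filter.Tendsto (fun k => ‖x (φ k)‖) Filter.atTop (nhds ‖v‖) := hxv.norm
    have h2 : Filter.Tendsto (fun k => ‖x (φ k)‖) Filter.atTop (nhds 1) := by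
      simpa [hx1] using tendsto_const_nhds (α := ℝ) (f := Filter.atTop (α := ℕ)) (a := 1)
    exact tendsto_nhds_unique h1 h2
  have hv0 : v ≠ 0 := by
    intro h0; rw [h0, norm_zero] at hvnorm; norm_num at hvnorm
  refine ⟨μ, v, hμ, hv0, ?_⟩
  have hSv : Filter.Tendsto (fun k => S (x (φ k))) Filter.atTop (nhds (S v)) :=
    (S.continuous.tendsto v).comp hxv
  have hSv' : Filter.Tendsto (fun k => S (x (φ k))) Filter.atTop (nhds ((μ : ℂ) • v)) := by
    have hdφ : Filter.Tendsto (fun k => S (x (φ k)) - (μ : ℂ) • x (φ k)) Filter.atTop (nhds 0) :=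
      hd0.comp hφ.tendsto_atTop
    have hsmul : Filter.Tendsto (fun k => (μ : ℂ) • x (φ k)) Filter.atTop (nhds ((μ : ℂ) • v)) :=
      hxv.const_smul _
    have := hdφ.add hsmul
    simpa using this
  exact tendsto_nhds_unique hSv hSv'

theorem aux_subrep {Γ : Type} [Group Γ] [CompleteSpace K] [CompleteSpace H]
    (π : Γ →* (H ≃ₗᵢ[ℂ] H)) (σ : Γ →* (K ≃ₗᵢ[ℂ] K)) (T : K →L[ℂ] H)
    (hs : IsHilbertSchmidt T) (hne : T ≠ 0)
    (hint : ∀ (γ : Γ) (x : K), π γ (T x) = T (σ γ x)) :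
    ∃ V : Submodule ℂ H, V ≠ ⊥ ∧ FiniteDimensional ℂ V ∧
      ∀ (γ : Γ), ∀ x ∈ V, π γ x ∈ V := by
  classical
  set A := ContinuousLinearMap.adjoint T with hA
  set S := T ∘L A with hSdef
  have hTA : ContinuousLinearMap.adjoint A = T := by
    rw [hA, ContinuousLinearMap.adjoint_adjoint]
  have hππ : ∀ (γ : Γ) (y : H), π γ (π γ⁻¹ y) = y := by
    intro γ y
    have h1 : π γ * π γ⁻¹ = 1 := by rw [← map_mul, mul_inv_cancel, map_one]
    calc π γ (π γ⁻¹ y) = (π γ * π γ⁻¹) y := rfl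
      _ = y := by rw [h1]; rfl
  have hσσ : ∀ (γ : Γ) (y : K), σ γ (σ γ⁻¹ y) = y := by
    intro γ y
    have h1 : σ γ * σ γ⁻¹ = 1 := by rw [← map_mul, mul_inv_cancel, map_one]
    calc σ γ (σ γ⁻¹ y) = (σ γ * σ γ⁻¹) y := rfl
      _ = y := by rw [h1]; rfl
  have hadj : ∀ (γ : Γ) (x : H), A (π γ x) = σ γ (A x) := by
    intro γ x
    apply ext_inner_right ℂ
    intro v
    have h1 : ⟪A (π γ x), v⟫_ℂ = ⟪π γ x, T v⟫_ℂ :=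
      ContinuousLinearMap.adjoint_inner_left T v (π γ x)
    have h2 : ⟪σ γ (A x), v⟫_ℂ = ⟪A x, σ γ⁻¹ v⟫_ℂ := by
      conv_lhs => rw [show v = σ γ (σ γ⁻¹ v) from (hσσ γ v).symm]
      exact (σ γ).inner_map_map _ _
    have h3 : ⟪A x, σ γ⁻¹ v⟫_ℂ = ⟪x, T (σ γ⁻¹ v)⟫_ℂ :=
      ContinuousLinearMap.adjoint_inner_left T (σ γ⁻¹ v) x
    have h4 : T (σ γ⁻¹ v) = π γ⁻¹ (T v) := (hint γ⁻¹ v).symm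
    have h5 : ⟪x, π γ⁻¹ (T v)⟫_ℂ = ⟪π γ x, T v⟫_ℂ := by
      conv_rhs => rw [show T v = π γ (π γ⁻¹ (T v)) from (hππ γ (T v)).symm]
      exact ((π γ).inner_map_map _ _).symm
    rw [h1, h2, h3, h4, h5]
  have hScomm : ∀ (γ : Γ) (x : H), π γ (S x) = S (π γ x) := by
    intro γ x
    calc π γ (S x) = π γ (T (A x)) := rfl
      _ = T (σ γ (A x)) := hint γ (A x)
      _ = T (A (π γ x)) := by rw [← hadj]
      _ = S (π γ x) := rfl
  obtain ⟨μ, v₀, hμ, hv₀, hSv₀⟩ := exists_eigenvector T hs hne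
  set V : Submodule ℂ H :=
    { carrier := {y | S y = (μ : ℂ) • y}
      add_mem' := fun {a b} ha hb => by
        simp only [Set.mem_setOf_eq] at *
        rw [map_add, ha, hb, smul_add]
      zero_mem' := by simp
      smul_mem' := fun c y hy => by
        simp only [Set.mem_setOf_eq] at *
        rw [map_smul, hy, smul_comm] } with hV
  have hmemV : ∀ y : H, y ∈ V ↔ S y = (μ : ℂ) • y := fun y => Iff.rfl
  have hVne : V ≠ ⊥ := by
    intro h0
    have : v₀ ∈ V := (hmemV v₀).2 hSv₀
    rw [h0, Submodule.mem_bot] at this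
    exact hv₀ this
  have hVinv : ∀ (γ : Γ), ∀ y ∈ V, π γ y ∈ V := by
    intro γ y hy
    rw [hmemV] at hy ⊢
    rw [← hScomm, hy, map_smul]
  refine ⟨V, hVne, ?_, hVinv⟩
  -- finite-dimensionality of V
  obtain ⟨C, hC⟩ := hs
  have hsqrt : Real.sqrt μ * Real.sqrt μ = μ := Real.mul_self_sqrt hμ.le
  have hsqrtpos : 0 < Real.sqrt μ := Real.sqrt_pos.2 hμ
  set c : ℂ := ((Real.sqrt μ : ℝ) : ℂ)⁻¹ with hc
  set g : H → K := fun y => c • A y with hg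
  have hginner : ∀ y z : H, z ∈ V → ⟪g y, g z⟫_ℂ = ⟪y, z⟫_ℂ := by
    intro y z hz
    have h1 : ⟪A y, A z⟫_ℂ = ⟪y, T (A z)⟫_ℂ :=
      ContinuousLinearMap.adjoint_inner_left T (A z) y
    have h2 : T (A z) = (μ : ℂ) • z := (hmemV z).1 hz
    have h3 : ⟪g y, g z⟫_ℂ = (starRingEnd ℂ) c * (c * ⟪A y, A z⟫_ℂ) := by
      rw [hg]
      simp only [inner_smul_left, inner_smul_right]
      ring
    rw [h3, h1, h2, inner_smul_right]
    have hne0 : Real.sqrt μ ≠ 0 := hsqrtpos.ne'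
    have hcc : (starRingEnd ℂ) c * (c * (μ : ℂ)) = 1 := by
      have hr : (Real.sqrt μ)⁻¹ * ((Real.sqrt μ)⁻¹ * μ) = 1 := by
        field_simp
        rw [Real.sq_sqrt hμ.le]
      rw [hc, ← Complex.ofReal_inv, Complex.conj_ofReal]
      exact_mod_cast hr
    calc (starRingEnd ℂ) c * (c * ((μ:ℂ) * ⟪y, z⟫_ℂ))
        = ((starRingEnd ℂ) c * (c * (μ:ℂ))) * ⟪y, z⟫_ℂ := by ring
      _ = ⟪y, z⟫_ℂ := by rw [hcc, one_mul]
  have hkey : ∀ s : Finset H, (∀ y ∈ s, y ∈ V) → (∀ y ∈ s, ‖y‖ = 1) →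
      (∀ y ∈ s, ∀ z ∈ s, y ≠ z → ⟪y, z⟫_ℂ = 0) → (s.card : ℝ) * μ ≤ C := by
    intro s hsV hs1 hsorth
    have hginj : Set.InjOn g s := by
      intro y hy z hz hyz
      have hsub : (y - z) ∈ V := Submodule.sub_mem V (hsV y hy) (hsV z hz)
      have hgsub : g (y - z) = 0 := by
        rw [hg]
        simp only [map_sub, smul_sub]
        rw [show c • A y = g y from rfl, show c • A z = g z from rfl, hyz, sub_self]
      have := hginner (y - z) (y - z) hsub
      rw [hgsub, inner_zero_left] at this
      have h0 : y - z = 0 := inner_self_eq_zero.1 this.symm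
      exact sub_eq_zero.1 h0
    set t : Finset K := s.image g with ht
    have hcard : t.card = s.card := Finset.card_image_of_injOn hginj
    have htnorm : ∀ u ∈ t, ‖u‖ = 1 := by
      intro u hu
      rw [ht, Finset.mem_image] at hu
      obtain ⟨y, hy, rfl⟩ := hu
      have h1 : ⟪g y, g y⟫_ℂ = ⟪y, y⟫_ℂ := hginner y y (hsV y hy)
      rw [inner_self_eq_norm_sq_to_K, inner_self_eq_norm_sq_to_K] at h1
      have h2 : ‖g y‖ ^ 2 = ‖y‖ ^ 2 := by exact_mod_cast h1
      have h3 := congrArg Real.sqrt h2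
      rw [Real.sqrt_sq (norm_nonneg _), Real.sqrt_sq (norm_nonneg _)] at h3
      rw [h3, hs1 y hy]
    have htorth : ∀ u ∈ t, ∀ w ∈ t, u ≠ w → ⟪u, w⟫_ℂ = 0 := by
      intro u hu w hw huw
      rw [ht, Finset.mem_image] at hu hw
      obtain ⟨y, hy, rfl⟩ := hu
      obtain ⟨z, hz, rfl⟩ := hw
      have hyz : y ≠ z := fun h => huw (by rw [h])
      rw [hginner y z (hsV z hz)]
      exact hsorth y hy z hz hyz
    have hsum := hC t htnorm htorth
    have hTg : ∀ y ∈ s, ‖T (g y)‖ ^ 2 = μ := by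
      intro y hy
      have h1 : T (g y) = c • ((μ : ℂ) • y) := by
        rw [hg]
        simp only [map_smul]
        rw [show T (A y) = S y from rfl, (hmemV y).1 (hsV y hy)]
      rw [h1, norm_smul, norm_smul, hs1 y hy, mul_one]
      have hcnorm : ‖c‖ = (Real.sqrt μ)⁻¹ := by
        rw [hc, norm_inv, Complex.norm_real, Real.norm_eq_abs,
          abs_of_pos hsqrtpos]
      have hμnorm : ‖(μ : ℂ)‖ = μ := by
        rw [Complex.norm_real, Real.norm_eq_abs, abs_of_pos hμ]
      rw [hcnorm, hμnorm]
      have hne0 : Real.sqrt μ ≠ 0 := hsqrtpos.ne'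
      field_simp
      rw [Real.sq_sqrt hμ.le]
    have hsum2 : ∑ u ∈ t, ‖T u‖ ^ 2 = (s.card : ℝ) * μ := by
      rw [ht, Finset.sum_image (fun y hy z hz h => hginj hy hz h)]
      rw [Finset.sum_congr rfl hTg, Finset.sum_const, nsmul_eq_mul]
    rw [hsum2] at hsum
    exact hsum
  -- now use a Hilbert basis of V
  have hclosed : IsClosed (V : Set H) := by
    have : (V : Set H) = {y | S y = (μ : ℂ) • y} := rfl
    rw [this]
    exact isClosed_eq S.continuous (continuous_id.const_smul _)
  haveI : CompleteSpace V := hclosed.completeSpace_coe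
  obtain ⟨w, b, hbw⟩ := exists_hilbertBasis ℂ V
  have hwfin : w.Finite := by
    by_contra hinf
    haveI : Infinite ↥w := Set.infinite_coe_iff.2 hinf
    obtain ⟨n, hn⟩ := exists_nat_gt (C / μ)
    obtain ⟨tw, htw⟩ := Infinite.exists_subset_card_eq ↥w n
    set s : Finset H := tw.image (fun u : ↥w => ((u : V) : H)) with hsdef
    have hinj2 : Function.Injective (fun u : ↥w => ((u : V) : H)) := by
      intro a b hab
      exact Subtype.ext (Subtype.ext hab)
    have hcards : s.card = n := by rw [hsdef, Finset.card_image_of_injective _ hinj2, htw]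
    have horthb := b.orthonormal
    rw [hbw] at horthb
    have hsV : ∀ y ∈ s, y ∈ V := by
      intro y hy
      rw [hsdef, Finset.mem_image] at hy
      obtain ⟨u, _, rfl⟩ := hy
      exact Submodule.coe_mem _
    have hs1 : ∀ y ∈ s, ‖y‖ = 1 := by
      intro y hy
      rw [hsdef, Finset.mem_image] at hy
      obtain ⟨u, _, rfl⟩ := hy
      have h0 := horthb.1 u
      rw [Submodule.coe_norm] at h0
      exact h0
    have hsorth : ∀ y ∈ s, ∀ z ∈ s, y ≠ z → ⟪y, z⟫_ℂ = 0 := by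
      intro y hy z hz hyz
      rw [hsdef, Finset.mem_image] at hy hz
      obtain ⟨a, _, rfl⟩ := hy
      obtain ⟨b', _, rfl⟩ := hz
      have hab : a ≠ b' := fun h => hyz (by rw [h])
      have h0 : ⟪(a : V), (b' : V)⟫_ℂ = 0 := horthb.2 hab
      rw [Submodule.coe_inner] at h0
      exact h0
    have hle := hkey s hsV hs1 hsorth
    rw [hcards] at hle
    rw [div_lt_iff₀ hμ] at hn
    linarith
  haveI : Fintype ↥w := hwfin.fintype
  have hOB := b.toOrthonormalBasis
  exact Module.Finite.of_basis hOB.toBasis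

set_option maxHeartbeats 1000000 in
theorem proj_witness {Γ : Type} [Group Γ] [CompleteSpace H]
    (π : Γ →* (H ≃ₗᵢ[ℂ] H)) (V : Submodule ℂ H)
    (hne : V ≠ ⊥) (hfd : FiniteDimensional ℂ V)
    (hinv : ∀ (γ : Γ), ∀ x ∈ V, π γ x ∈ V) :
    ∃ T : H →L[ℂ] H, IsHilbertSchmidt T ∧ T ≠ 0 ∧
      ∀ (γ : Γ) (x : H), π γ (T x) = T (π γ x) := by
  classical
  haveI : CompleteSpace V := FiniteDimensional.complete ℂ V
  set P : H →L[ℂ] H := V.subtypeL ∘L V.orthogonalProjectionOnto with hP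
  have hππ : ∀ (γ : Γ) (y : H), π γ (π γ⁻¹ y) = y := by
    intro γ y
    have h1 : π γ * π γ⁻¹ = 1 := by rw [← map_mul, mul_inv_cancel, map_one]
    calc π γ (π γ⁻¹ y) = (π γ * π γ⁻¹) y := rfl
      _ = y := by rw [h1]; rfl
  have hinv' : ∀ (γ : Γ), ∀ x ∈ V, π γ⁻¹ x ∈ V := fun γ x hx => hinv γ⁻¹ x hx
  set n := Module.finrank ℂ V with hn
  set b := stdOrthonormalBasis ℂ V with hb
  have hPnorm : ∀ y : H, ‖P y‖ ^ 2 = ∑ i : Fin n, ‖⟪((b i : V) : H), y⟫_ℂ‖ ^ 2 := by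
    intro y
    have h1 : ‖P y‖ = ‖V.orthogonalProjectionOnto y‖ := (Submodule.coe_norm _).symm
    have h2 : ‖V.orthogonalProjectionOnto y‖ = ‖b.repr (V.orthogonalProjectionOnto y)‖ :=
      (b.repr.norm_map _).symm
    have h3 : ‖b.repr (V.orthogonalProjectionOnto y)‖ =
        Real.sqrt (∑ i : Fin n, ‖b.repr (V.orthogonalProjectionOnto y) i‖ ^ 2) :=
      EuclideanSpace.norm_eq _
    have h4 : ∀ i, b.repr (V.orthogonalProjectionOnto y) i = ⟪((b i : V) : H), y⟫_ℂ := by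
      intro i
      rw [b.repr_apply_apply, Submodule.inner_orthogonalProjectionOnto_eq_of_mem_left]
    rw [h1, h2, h3]
    rw [Real.sq_sqrt (by positivity)]
    exact Finset.sum_congr rfl fun i _ => by rw [h4 i]
  refine ⟨P, ⟨(n : ℝ), ?_⟩, ?_, ?_⟩
  · -- Hilbert–Schmidt
    intro s hs1 hsorth
    have horth : Orthonormal ℂ (fun v : ↥s => (v : H)) := by
      constructor
      · intro i; exact hs1 i i.2
      · intro i j hij
        exact hsorth i i.2 j j.2 (fun h => hij (Subtype.ext h))
    calc ∑ v ∈ s, ‖P v‖ ^ 2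
        = ∑ v ∈ s, ∑ i : Fin n, ‖⟪((b i : V) : H), v⟫_ℂ‖ ^ 2 :=
          Finset.sum_congr rfl fun v _ => hPnorm v
      _ = ∑ i : Fin n, ∑ v ∈ s, ‖⟪((b i : V) : H), v⟫_ℂ‖ ^ 2 := Finset.sum_comm
      _ ≤ ∑ _i : Fin n, (1 : ℝ) := by
          apply Finset.sum_le_sum
          intro i _
          have hbn : ‖((b i : V) : H)‖ = 1 := by
            rw [← Submodule.coe_norm]
            exact b.orthonormal.1 i
          calc ∑ v ∈ s, ‖⟪((b i : V) : H), v⟫_ℂ‖ ^ 2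
              = ∑ v ∈ s, ‖⟪v, ((b i : V) : H)⟫_ℂ‖ ^ 2 :=
                Finset.sum_congr rfl fun v _ => by rw [norm_inner_symm]
            _ = ∑ v : ↥s, ‖⟪(v : H), ((b i : V) : H)⟫_ℂ‖ ^ 2 :=
                (Finset.sum_coe_sort s _).symm
            _ ≤ ‖((b i : V) : H)‖ ^ 2 :=
                horth.sum_inner_products_le (s := Finset.univ) ((b i : V) : H)
            _ = 1 := by rw [hbn]; norm_num
      _ = (n : ℝ) := by simp
  · -- nonzero
    obtain ⟨x, hxV, hx0⟩ := Submodule.exists_mem_ne_zero_of_ne_bot hne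
    intro h0
    apply hx0
    have hPx : P x = x := by
      have h1 : V.orthogonalProjectionOnto x = ⟨x, hxV⟩ := by
        have := Submodule.orthogonalProjectionOnto_mem_subspace_eq_self (K := V) ⟨x, hxV⟩
        simpa using this
      calc P x = ((V.orthogonalProjectionOnto x : V) : H) := rfl
        _ = x := by rw [h1]
    rw [h0] at hPx
    simpa using hPx.symm
  · -- equivariance
    intro γ y
    have hPVmem : P y ∈ V := Submodule.coe_mem _
    have hyP : y - P y ∈ Vᗮ := Submodule.sub_starProjection_mem_orthogonal y
    have hPV : ∀ z (hz : z ∈ V), P z = z := by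
      intro z hz
      have := Submodule.orthogonalProjectionOnto_mem_subspace_eq_self (K := V) ⟨z, hz⟩
      calc P z = ((V.orthogonalProjectionOnto z : V) : H) := rfl
        _ = z := by rw [this]
    have hPbot : ∀ z, z ∈ Vᗮ → P z = 0 := by
      intro z hz
      have := Submodule.orthogonalProjectionOnto_apply_of_mem_orthogonal hz
      calc P z = ((V.orthogonalProjectionOnto z : V) : H) := rfl
        _ = 0 := by rw [this]; rfl
    have hπbot : π γ (y - P y) ∈ Vᗮ := by
      rw [Submodule.mem_orthogonal]
      intro u hu
      have h1 : u = π γ (π γ⁻¹ u) := (hππ γ u).symm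
      rw [h1, (π γ).inner_map_map]
      exact (Submodule.mem_orthogonal V _).1 hyP _ (hinv' γ u hu)
    have hsplit : π γ y = π γ (P y) + π γ (y - P y) := by
      rw [← map_add]
      congr 1
      abel
    rw [hsplit, map_add, hPV _ (hinv γ _ hPVmem), hPbot _ hπbot, add_zero]

/-- A witness that `π ⊗ σ` has a nonzero invariant vector for some unitary
representation `σ` of `Γ` on a Hilbert space `K`: under the identification of
invariant vectors of `π ⊗ conj σ` with Hilbert–Schmidt intertwiners, this is a
nonzero Hilbert–Schmidt operator `T : K → H` with `π γ ∘ T = T ∘ σ γ`. -/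
structure TensorInvariantWitness (Γ : Type) [Group Γ] (H : Type)
    [NormedAddCommGroup H] [InnerProductSpace ℂ H] [CompleteSpace H]
    (π : Γ →* (H ≃ₗᵢ[ℂ] H)) : Type 1 where
  K : Type
  [instN : NormedAddCommGroup K]
  [instI : InnerProductSpace ℂ K]
  [instC : CompleteSpace K]
  σ : Γ →* (K ≃ₗᵢ[ℂ] K)
  T : K →L[ℂ] H
  hs : IsHilbertSchmidt T
  ne : T ≠ 0
  intertwines : ∀ (γ : Γ) (x : K), π γ (T x) = T (σ γ x)

/-- For a unitary representation `π` of a countable discrete group `Γ`, the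
following are equivalent: (a) `π ⊗ conj π` has a nonzero invariant vector,
i.e. there is a nonzero `π`-equivariant Hilbert–Schmidt operator on `H`;
(b) `π ⊗ σ` has a nonzero invariant vector for some unitary representation
`σ`; (c) `π` has a nonzero finite-dimensional invariant subspace. -/
theorem tensor_invariant_iff_finiteDimensional_subrep
    (Γ : Type) [Group Γ] [Countable Γ]
    (H : Type) [NormedAddCommGroup H] [InnerProductSpace ℂ H] [CompleteSpace H]
    (π : Γ →* (H ≃ₗᵢ[ℂ] H)) :
    ((∃ T : H →L[ℂ] H, IsHilbertSchmidt T ∧ T ≠ 0 ∧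
        ∀ (γ : Γ) (x : H), π γ (T x) = T (π γ x)) ↔
      (∃ V : Submodule ℂ H, V ≠ ⊥ ∧ FiniteDimensional ℂ V ∧
        ∀ (γ : Γ), ∀ x ∈ V, π γ x ∈ V)) ∧
    (Nonempty (TensorInvariantWitness Γ H π) ↔
      (∃ V : Submodule ℂ H, V ≠ ⊥ ∧ FiniteDimensional ℂ V ∧
        ∀ (γ : Γ), ∀ x ∈ V, π γ x ∈ V)) := by
  constructor
  · constructor
    · rintro ⟨T, hs, hne, hcomm⟩
      exact aux_subrep π π T hs hne hcomm
    · rintro ⟨V, hne, hfd, hinv⟩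
      exact proj_witness π V hne hfd hinv
  · constructor
    · rintro ⟨w⟩
      letI := w.instN
      letI := w.instI
      letI := w.instC
      exact aux_subrep π w.σ w.T w.hs w.ne w.intertwines
    · rintro ⟨V, hne, hfd, hinv⟩
      obtain ⟨T, hs, hne', hcomm⟩ := proj_witness π V hne hfd hinv
      exact ⟨{ K := H, σ := π, T := T, hs := hs, ne := hne', intertwines := hcomm }⟩
end

section
/- Let π : Γ → U(H) be a weak mixing unitary representation of a countable discrete group Γ, and let σ : Γ → U(K) be any unitary representation. Then π ⊗ σ is weak mixing. -/
open scoped InnerProductSpace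

/-- A unitary representation `π` of `Γ` on `H` is weak mixing: matrix
coefficients over finite sets of vectors can be made simultaneously small. -/
def IsWeakMixingRep (Γ : Type) [Group Γ] (H : Type) [NormedAddCommGroup H]
    [InnerProductSpace ℂ H] (π : Γ →* (H ≃ₗᵢ[ℂ] H)) : Prop :=
  ∀ (ε : ℝ), 0 < ε → ∀ s : Finset H,
    ∃ γ : Γ, ∀ ξ ∈ s, ∀ η ∈ s, ‖(⟪ξ, π γ η⟫_ℂ : ℂ)‖ < ε

/-- The inner product on the (algebraic) tensor product `H ⊗ K`, where a list
`u = [(ξ₁,η₁),…]` represents the vector `∑ᵢ ξᵢ ⊗ ηᵢ`: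
`⟨∑ᵢ ξᵢ ⊗ ηᵢ, ∑ⱼ ξ'ⱼ ⊗ η'ⱼ⟩ = ∑ᵢⱼ ⟨ξᵢ, ξ'ⱼ⟩ ⟨ηᵢ, η'ⱼ⟩`. -/
noncomputable def tensorInner {H K : Type} [NormedAddCommGroup H] [InnerProductSpace ℂ H]
    [NormedAddCommGroup K] [InnerProductSpace ℂ K]
    (u v : List (H × K)) : ℂ :=
  (u.map fun p => (v.map fun q => ⟪p.1, q.1⟫_ℂ * ⟪p.2, q.2⟫_ℂ).sum).sum

private lemma list_norm_sum_le {E : Type*} [SeminormedAddCommGroup E] (l : List E) :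
    ‖l.sum‖ ≤ (l.map norm).sum := by
  induction l with
  | nil => simp
  | cons a t ih =>
    simp only [List.sum_cons, List.map_cons]
    exact (norm_add_le _ _).trans (by linarith)

/-- If `π` is a weak mixing unitary representation of a countable discrete
group `Γ` on `H` and `σ` is any unitary representation of `Γ` on `K`, then
`π ⊗ σ` is weak mixing: for every `ε > 0` and every finite family of vectors
of `H ⊗ K` (each represented as a finite sum of elementary tensors, i.e. a
list of pairs), some `γ` makes all the matrix coefficients of `π ⊗ σ` at
these vectors smaller than `ε`. -/
theorem tensor_weakMixing_of_weakMixing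
    (Γ : Type) [Group Γ] [Countable Γ]
    (H : Type) [NormedAddCommGroup H] [InnerProductSpace ℂ H] [CompleteSpace H]
    (K : Type) [NormedAddCommGroup K] [InnerProductSpace ℂ K] [CompleteSpace K]
    (π : Γ →* (H ≃ₗᵢ[ℂ] H)) (σ : Γ →* (K ≃ₗᵢ[ℂ] K))
    (hwm : IsWeakMixingRep Γ H π) :
    ∀ (ε : ℝ), 0 < ε → ∀ L : List (List (H × K)),
      ∃ γ : Γ, ∀ u ∈ L, ∀ v ∈ L,
        ‖tensorInner u (v.map fun p => (π γ p.1, σ γ p.2))‖ < ε := by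
  intro ε hε L
  classical
  set C : ℝ := (L.map fun u => (u.map fun p => ‖p.2‖).sum).sum with hCdef
  have hnn : ∀ u ∈ L, 0 ≤ (u.map fun p : H × K => ‖p.2‖).sum := by
    intro u _
    exact List.sum_nonneg (by simp only [List.mem_map]; rintro _ ⟨p, _, rfl⟩; positivity)
  have hC : 0 ≤ C := List.sum_nonneg (by
    simp only [List.mem_map]; rintro _ ⟨u, hu, rfl⟩; exact hnn u hu)
  have hle : ∀ u ∈ L, (u.map fun p : H × K => ‖p.2‖).sum ≤ C := by
    intro u hu
    exact List.single_le_sum (by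
      simp only [List.mem_map]; rintro _ ⟨w, hw, rfl⟩; exact hnn w hw) _
      (List.mem_map.2 ⟨u, hu, rfl⟩)
  set ε' : ℝ := ε / (C ^ 2 + 1) with hε'def
  have hε' : 0 < ε' := by positivity
  set s : Finset H := (L.flatMap fun u => u.map Prod.fst).toFinset with hsdef
  obtain ⟨γ, hγ⟩ := hwm ε' hε' s
  refine ⟨γ, fun u hu v hv => ?_⟩
  have hmem : ∀ w ∈ L, ∀ p ∈ w, (p : H × K).1 ∈ s := by
    intro w hw p hp
    simp only [hsdef, List.mem_toFinset, List.mem_flatMap, List.mem_map]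
    exact ⟨w, hw, p, hp, rfl⟩
  -- rewrite tensorInner
  have key : ‖tensorInner u (v.map fun p => (π γ p.1, σ γ p.2))‖ ≤
      ε' * ((u.map fun p => ‖p.2‖).sum * (v.map fun q => ‖q.2‖).sum) := by
    unfold tensorInner
    simp only [List.map_map, Function.comp]
    calc ‖(u.map fun p => (v.map fun q =>
            ⟪p.1, (π γ q.1 : H)⟫_ℂ * ⟪p.2, (σ γ q.2 : K)⟫_ℂ).sum).sum‖
        ≤ ((u.map fun p => (v.map fun q =>
            ⟪p.1, (π γ q.1 : H)⟫_ℂ * ⟪p.2, (σ γ q.2 : K)⟫_ℂ).sum).map norm).sum :=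
          list_norm_sum_le _
      _ ≤ (u.map fun p => ε' * ‖p.2‖ * (v.map fun q => ‖q.2‖).sum).sum := by
          rw [List.map_map]
          apply List.sum_le_sum
          intro p hp
          simp only [Function.comp]
          calc ‖(v.map fun q =>
                ⟪p.1, (π γ q.1 : H)⟫_ℂ * ⟪p.2, (σ γ q.2 : K)⟫_ℂ).sum‖
              ≤ ((v.map fun q =>
                ⟪p.1, (π γ q.1 : H)⟫_ℂ * ⟪p.2, (σ γ q.2 : K)⟫_ℂ).map norm).sum :=
                list_norm_sum_le _
            _ ≤ (v.map fun q => ε' * ‖p.2‖ * ‖q.2‖).sum := by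
                rw [List.map_map]
                apply List.sum_le_sum
                intro q hq
                simp only [Function.comp, norm_mul]
                have h1 : ‖(⟪p.1, (π γ q.1 : H)⟫_ℂ : ℂ)‖ ≤ ε' :=
                  le_of_lt (hγ _ (hmem u hu p hp) _ (hmem v hv q hq))
                have h2 : ‖(⟪p.2, (σ γ q.2 : K)⟫_ℂ : ℂ)‖ ≤ ‖p.2‖ * ‖q.2‖ := by
                  refine (norm_inner_le_norm _ _).trans ?_
                  rw [(σ γ).norm_map]
                have := mul_le_mul h1 h2 (norm_nonneg _) (le_of_lt hε')
                linarith [this]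
            _ = ε' * ‖p.2‖ * (v.map fun q : H × K => ‖q.2‖).sum := by
                rw [← List.sum_map_mul_left]
      _ = ε' * ((u.map fun p : H × K => ‖p.2‖).sum * (v.map fun q : H × K => ‖q.2‖).sum) := by
          have hfun : (fun p : H × K => ε' * ‖p.2‖ * (v.map fun q : H × K => ‖q.2‖).sum)
              = fun p : H × K => (ε' * (v.map fun q : H × K => ‖q.2‖).sum) * ‖p.2‖ := by
            funext p; ring
          rw [hfun, List.sum_map_mul_left]
          ring
  refine key.trans_lt ?_
  have h1 := hle u hu
  have h2 := hle v hv
  have hosum : ε' * ((u.map fun p : H × K => ‖p.2‖).sum * (v.map fun q : H × K => ‖q.2‖).sum)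
      ≤ ε' * (C * C) := by
    apply mul_le_mul_of_nonneg_left _ (le_of_lt hε')
    exact mul_le_mul h1 h2 (hnn v hv) hC
  refine hosum.trans_lt ?_
  have : ε' * (C ^ 2 + 1) = ε := by
    rw [hε'def, div_mul_cancel₀ _ (by positivity)]
  nlinarith [hε']
end
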